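/- Let d ≥ 1 be an integer, let r > 0, and let g : ℝ → ℝ be continuously differentiable with g(0) = 1. For each positive integer k set J_k := ∫₀^r s^{d−1} ( k·g(s)·sin(ks) + g′(s)·cos(ks) )² ds. Then J_k / k² converges to (1/2)∫₀^r s^{d−1} g(s)² ds as k → ∞, this limit is strictly positive, and consequently J_k → +∞ as k → ∞. -/

import Mathlib

open MeasureTheory intervalIntegral Filter

private lemma RL_interval (r : ℝ) (hr : 0 ≤ r) (f : ℝ → ℝ) (hf : Continuous f) :
    Tendsto (fun k : ℕ => ∫ s in (0:ℝ)..r, f s * Real.cos (2 * k * s)) atTop (nhds 0) := by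
  set F : ℝ → ℂ := Set.indicator (Set.Ioc 0 r) (fun s => (f s : ℂ)) with hF
  have h1 : Tendsto (fun k : ℕ => (k : ℝ) / Real.pi) atTop atTop :=
    (tendsto_natCast_atTop_atTop).atTop_div_const Real.pi_pos
  have hw : Tendsto (fun k : ℕ => -((k : ℝ) / Real.pi)) atTop (cocompact ℝ) := by
    rw [cocompact_eq_atBot_atTop]
    exact (tendsto_neg_atTop_atBot.comp h1).mono_right le_sup_left
  have hRL := (Real.tendsto_integral_exp_smul_cocompact F).comp hw
  have hre : Tendsto (fun k : ℕ =>
      (∫ v : ℝ, Real.fourierChar (-(v * (-((k : ℝ) / Real.pi)))) • F v).re) atTop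
      (nhds ((0:ℂ).re)) := (Complex.continuous_re.tendsto 0).comp hRL
  rw [Complex.zero_re] at hre
  refine hre.congr fun k => ?_
  have hint : (fun v : ℝ => (Real.fourierChar (-(v * (-((k : ℝ) / Real.pi)))) : Circle) • F v)
      = Set.indicator (Set.Ioc 0 r)
          (fun v => (Real.fourierChar (-(v * (-((k : ℝ) / Real.pi)))) : ℂ) * (f v : ℂ)) := by
    funext v
    by_cases hv : v ∈ Set.Ioc 0 r
    · simp [hF, Set.indicator_of_mem hv, Circle.smul_def]
    · simp [hF, Set.indicator_of_notMem hv]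
  rw [intervalIntegral.integral_of_le hr, hint, MeasureTheory.integral_indicator measurableSet_Ioc]
  have hcont : Continuous fun s : ℝ =>
      (Real.fourierChar (-(s * (-((k : ℝ) / Real.pi)))) : ℂ) * (f s : ℂ) := by
    simp only [Real.fourierChar_apply]
    continuity
  rw [← RCLike.re_eq_complex_re, ← integral_re (hcont.integrableOn_Ioc)]
  refine setIntegral_congr_fun measurableSet_Ioc (fun s _ => ?_)
  rw [Real.fourierChar_apply]
  have : 2 * Real.pi * (-(s * (-((k : ℝ) / Real.pi)))) = 2 * k * s := by
    field_simp
  rw [this, RCLike.re_eq_complex_re, Complex.mul_re, Complex.exp_ofReal_mul_I_re, Complex.exp_ofReal_mul_I_im]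
  simp [Complex.ofReal_re, Complex.ofReal_im]
  ring


/-- The polar-coordinate computation of Section 2.2 establishing (Eq:Goal3):
with `J_k = ∫₀^r s^{d-1}(k g(s) sin(ks) + g'(s) cos(ks))² ds`, one has
`J_k/k² → (1/2)∫₀^r s^{d-1} g(s)² ds > 0`, and hence `J_k → +∞`. -/
theorem polar_dirichlet_energy_asymptotics
    (d : ℕ) (hd : 1 ≤ d) (r : ℝ) (hr : 0 < r)
    (g : ℝ → ℝ) (hg : ContDiff ℝ 1 g) (hg0 : g 0 = 1) :
    Tendsto
      (fun k : ℕ =>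
        (∫ s in (0:ℝ)..r, s ^ (d - 1) *
          ((k:ℝ) * g s * Real.sin ((k:ℝ) * s) + deriv g s * Real.cos ((k:ℝ) * s)) ^ 2)
          / (k:ℝ) ^ 2)
      atTop (nhds ((1/2) * ∫ s in (0:ℝ)..r, s ^ (d - 1) * g s ^ 2)) ∧
    0 < (1/2) * (∫ s in (0:ℝ)..r, s ^ (d - 1) * g s ^ 2) ∧
    Tendsto
      (fun k : ℕ =>
        ∫ s in (0:ℝ)..r, s ^ (d - 1) *
          ((k:ℝ) * g s * Real.sin ((k:ℝ) * s) + deriv g s * Real.cos ((k:ℝ) * s)) ^ 2)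
      atTop atTop := by
  have hgc : Continuous g := hg.continuous
  have hg' : Continuous (deriv g) := hg.continuous_deriv le_rfl
  set n := d - 1 with hn
  set F : ℝ → ℝ := fun s => s ^ n * g s ^ 2 with hF
  set H : ℝ → ℝ := fun s => s ^ n * (g s * deriv g s) with hH
  set Q : ℝ → ℝ := fun s => s ^ n * (deriv g s) ^ 2 with hQ
  have hFc : Continuous F := by fun_prop
  have hHc : Continuous H := by fun_prop
  have hQc : Continuous Q := by fun_prop
  set c : ℝ := ∫ s in (0:ℝ)..r, F s with hc
  set J : ℕ → ℝ := fun k => ∫ s in (0:ℝ)..r, s ^ n *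
      ((k:ℝ) * g s * Real.sin ((k:ℝ) * s) + deriv g s * Real.cos ((k:ℝ) * s)) ^ 2 with hJdef
  -- Positivity
  have hcpos : 0 < (1/2) * c := by
    have hU : IsOpen (g ⁻¹' Set.Ioi 0) := (isOpen_Ioi).preimage hgc
    have h0U : (0:ℝ) ∈ g ⁻¹' Set.Ioi 0 := by simp [hg0]
    obtain ⟨ε, hε, hball⟩ := Metric.isOpen_iff.1 hU 0 h0U
    set δ : ℝ := min (ε/2) r with hδ
    have hδpos : 0 < δ := lt_min (by linarith) hr
    have hδr : δ ≤ r := min_le_right _ _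
    have hpos : ∀ s ∈ Set.Ioo (0:ℝ) δ, 0 < F s := by
      intro s hs
      have hgs : 0 < g s := by
        have : s ∈ Metric.ball (0:ℝ) ε := by
          simp only [Metric.mem_ball, Real.dist_eq, sub_zero]
          rw [abs_of_pos hs.1]
          calc s < δ := hs.2
            _ ≤ ε/2 := min_le_left _ _
            _ < ε := by linarith
        exact hball this
      have : 0 < s ^ n := pow_pos hs.1 n
      positivity
    have h1 : 0 < ∫ s in (0:ℝ)..δ, F s :=
      intervalIntegral_pos_of_pos_on (hFc.intervalIntegrable _ _) hpos hδpos
    have h2 : 0 ≤ ∫ s in δ..r, F s := by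
      apply intervalIntegral.integral_nonneg hδr
      intro s hs
      have hs0 : 0 ≤ s := le_trans hδpos.le hs.1
      have : 0 ≤ s ^ n := pow_nonneg hs0 n
      positivity
    have hsplit : (∫ s in (0:ℝ)..δ, F s) + ∫ s in δ..r, F s = c :=
      intervalIntegral.integral_add_adjacent_intervals
        (hFc.intervalIntegrable _ _) (hFc.intervalIntegrable _ _)
    have : 0 < c := by rw [← hsplit]; linarith
    linarith
  -- Oscillatory integrals
  set R : ℕ → ℝ := fun k => ∫ s in (0:ℝ)..r, F s * Real.cos (2 * k * s) with hR
  set I2 : ℕ → ℝ := fun k => ∫ s in (0:ℝ)..r,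
      H s * (Real.sin ((k:ℝ) * s) * Real.cos ((k:ℝ) * s)) with hI2
  set I3 : ℕ → ℝ := fun k => ∫ s in (0:ℝ)..r, Q s * Real.cos ((k:ℝ) * s) ^ 2 with hI3
  have hRlim : Tendsto R atTop (nhds 0) := RL_interval r hr.le F hFc
  set M2 : ℝ := ∫ s in (0:ℝ)..r, |H s| with hM2
  set M3 : ℝ := ∫ s in (0:ℝ)..r, |Q s| with hM3
  have hM2nn : 0 ≤ M2 := intervalIntegral.integral_nonneg hr.le (fun s _ => abs_nonneg _)
  have hM3nn : 0 ≤ M3 := intervalIntegral.integral_nonneg hr.le (fun s _ => abs_nonneg _)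
  have hbound : ∀ (φ : ℝ → ℝ), Continuous φ → ∀ (e : ℝ → ℝ), Continuous e →
      (∀ s, |e s| ≤ 1) → |∫ s in (0:ℝ)..r, φ s * e s| ≤ ∫ s in (0:ℝ)..r, |φ s| := by
    intro φ hφ e he hle
    calc |∫ s in (0:ℝ)..r, φ s * e s| ≤ ∫ s in (0:ℝ)..r, |φ s * e s| :=
          intervalIntegral.abs_integral_le_integral_abs hr.le
      _ ≤ ∫ s in (0:ℝ)..r, |φ s| := by
          apply intervalIntegral.integral_mono_on hr.le
            ((hφ.mul he).abs.intervalIntegrable _ _) (hφ.abs.intervalIntegrable _ _)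
          intro s _
          rw [Pi.mul_apply, abs_mul]
          exact mul_le_of_le_one_right (abs_nonneg _) (hle s)
  have hI2b : ∀ k, |I2 k| ≤ M2 := by
    intro k
    refine hbound H hHc (fun s => Real.sin ((k:ℝ)*s) * Real.cos ((k:ℝ)*s)) (by fun_prop) ?_
    intro s
    rw [abs_mul]
    exact mul_le_one₀ (Real.abs_sin_le_one _) (abs_nonneg _) (Real.abs_cos_le_one _)
  have hI3b : ∀ k, |I3 k| ≤ M3 := by
    intro k
    refine hbound Q hQc (fun s => Real.cos ((k:ℝ)*s) ^ 2) (by fun_prop) ?_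
    intro s
    rw [abs_pow]
    exact pow_le_one₀ (abs_nonneg _) (Real.abs_cos_le_one _)
  -- The decomposed expression S
  set S : ℕ → ℝ := fun k => (1/2)*c - (1/2)*(R k) + (2/(k:ℝ))*(I2 k) + (1/(k:ℝ)^2)*(I3 k)
    with hS
  have hSlim : Tendsto S atTop (nhds ((1/2)*c)) := by
    have t2 : Tendsto (fun k => (1/2)*(R k)) atTop (nhds 0) := by
      simpa using hRlim.const_mul (1/2 : ℝ)
    have t3 : Tendsto (fun k : ℕ => (2/(k:ℝ))*(I2 k)) atTop (nhds 0) := by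
      apply squeeze_zero_norm (a := fun k : ℕ => 2*M2/(k:ℝ)) _
        (tendsto_const_div_atTop_nhds_zero_nat _)
      intro k
      rw [Real.norm_eq_abs, abs_mul, abs_of_nonneg (show (0:ℝ) ≤ 2/(k:ℝ) by positivity)]
      calc 2/(k:ℝ) * |I2 k| ≤ 2/(k:ℝ) * M2 :=
            mul_le_mul_of_nonneg_left (hI2b k) (by positivity)
        _ = 2*M2/(k:ℝ) := by ring
    have t4 : Tendsto (fun k : ℕ => (1/(k:ℝ)^2)*(I3 k)) atTop (nhds 0) := by
      apply squeeze_zero_norm (a := fun k : ℕ => M3/(k:ℝ)) _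
        (tendsto_const_div_atTop_nhds_zero_nat _)
      intro k
      rw [Real.norm_eq_abs, abs_mul]
      have h1 : |1/(k:ℝ)^2| = 1/(k:ℝ)^2 := abs_of_nonneg (by positivity)
      rw [h1]
      rcases Nat.eq_zero_or_pos k with hk | hk
      · simp [hk]
      · have hk1 : (1:ℝ) ≤ (k:ℝ) := by exact_mod_cast hk
        have e1 : (1:ℝ)/(k:ℝ)^2 ≤ 1/(k:ℝ) := by
          apply div_le_div_of_nonneg_left one_pos.le (by positivity) ?_ |>.trans_eq rfl
          · nlinarith
        calc 1/(k:ℝ)^2 * |I3 k| ≤ 1/(k:ℝ) * M3 := by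
              apply mul_le_mul e1 (hI3b k) (abs_nonneg _) (by positivity)
          _ = M3/(k:ℝ) := by ring
    have h := (((tendsto_const_nhds : Tendsto (fun _ : ℕ => (1/2)*c) atTop (nhds ((1/2)*c))).sub t2).add t3).add t4
    rw [hS]
    simpa using h
  -- The decomposition identity
  have hJeq : ∀ k : ℕ, J k = (k:ℝ)^2*((1/2)*c) - (k:ℝ)^2*((1/2)*(R k))
      + 2*(k:ℝ)*(I2 k) + I3 k := by
    intro k
    have hptwise : ∀ s ∈ Set.uIcc (0:ℝ) r, s ^ n *
        ((k:ℝ) * g s * Real.sin ((k:ℝ) * s) + deriv g s * Real.cos ((k:ℝ) * s)) ^ 2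
        = ((k:ℝ)^2*(F s*(1/2)) - (k:ℝ)^2*(F s * Real.cos (2*(k:ℝ)*s)*(1/2)))
          + 2*(k:ℝ)*(H s * (Real.sin ((k:ℝ)*s) * Real.cos ((k:ℝ)*s)))
          + Q s * Real.cos ((k:ℝ)*s)^2 := by
      intro s _
      have hs2 : Real.sin ((k:ℝ)*s)^2 = 1/2 - Real.cos (2*((k:ℝ)*s))/2 :=
        Real.sin_sq_eq_half_sub _
      have h2 : Real.cos (2*((k:ℝ)*s)) = Real.cos (2*(k:ℝ)*s) := by ring_nf
      rw [h2] at hs2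
      simp only [hF, hH, hQ]
      linear_combination ((k:ℝ)^2 * (s^n * g s^2)) * hs2
    have hi1 : IntervalIntegrable (fun s => (k:ℝ)^2*(F s*(1/2))) volume 0 r :=
      (by fun_prop : Continuous fun s => (k:ℝ)^2*(F s*(1/2))).intervalIntegrable _ _
    have hi2 : IntervalIntegrable (fun s => (k:ℝ)^2*(F s * Real.cos (2*(k:ℝ)*s)*(1/2)))
        volume 0 r := (by fun_prop :
        Continuous fun s => (k:ℝ)^2*(F s * Real.cos (2*(k:ℝ)*s)*(1/2))).intervalIntegrable _ _
    have hi3 : IntervalIntegrable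
        (fun s => 2*(k:ℝ)*(H s * (Real.sin ((k:ℝ)*s) * Real.cos ((k:ℝ)*s)))) volume 0 r :=
      (by fun_prop : Continuous fun s =>
        2*(k:ℝ)*(H s * (Real.sin ((k:ℝ)*s) * Real.cos ((k:ℝ)*s)))).intervalIntegrable _ _
    have hi4 : IntervalIntegrable (fun s => Q s * Real.cos ((k:ℝ)*s)^2) volume 0 r :=
      (by fun_prop : Continuous fun s => Q s * Real.cos ((k:ℝ)*s)^2).intervalIntegrable _ _
    calc J k = ∫ s in (0:ℝ)..r,
          (((k:ℝ)^2*(F s*(1/2)) - (k:ℝ)^2*(F s * Real.cos (2*(k:ℝ)*s)*(1/2)))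
          + 2*(k:ℝ)*(H s * (Real.sin ((k:ℝ)*s) * Real.cos ((k:ℝ)*s)))
          + Q s * Real.cos ((k:ℝ)*s)^2) := intervalIntegral.integral_congr hptwise
      _ = (k:ℝ)^2*((1/2)*c) - (k:ℝ)^2*((1/2)*(R k)) + 2*(k:ℝ)*(I2 k) + I3 k := by
          rw [intervalIntegral.integral_add ((hi1.sub hi2).add hi3) hi4,
            intervalIntegral.integral_add (hi1.sub hi2) hi3,
            intervalIntegral.integral_sub hi1 hi2,
            intervalIntegral.integral_const_mul, intervalIntegral.integral_const_mul,
            intervalIntegral.integral_const_mul]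
          simp only [hc, hR, hI2, hI3]
          rw [intervalIntegral.integral_mul_const, intervalIntegral.integral_mul_const]
          ring
  -- Part 1
  have part1 : Tendsto (fun k : ℕ => J k / (k:ℝ)^2) atTop (nhds ((1/2)*c)) := by
    apply hSlim.congr'
    filter_upwards [eventually_ge_atTop 1] with k hk
    have hkne : ((k:ℝ)) ≠ 0 := by positivity
    rw [hJeq k, hS]
    field_simp
  refine ⟨part1, hcpos, ?_⟩
  have hk2 : Tendsto (fun k : ℕ => ((k:ℝ))^2) atTop atTop :=
    (tendsto_pow_atTop two_ne_zero).comp tendsto_natCast_atTop_atTop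
  have := (part1.pos_mul_atTop hcpos) hk2
  apply this.congr'
  filter_upwards [eventually_ge_atTop 1] with k hk
  have hkne : ((k:ℝ)) ≠ 0 := by positivity
  field_simp
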